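/- For two finite multisets of real numbers of the same cardinality n, the infimum over all bijections τ of (Σ_x |x − τ(x)|^r)^{1/r} (for r ≥ 1) is achieved by the bijection τ* that matches the i-th smallest element of the first multiset to the i-th smallest element of the second, for every i. -/

import Mathlib

open Finset

lemma myconv {r : ℝ} (hr : 1 ≤ r) : ConvexOn ℝ Set.univ (fun x : ℝ => |x| ^ r) := by
  have h1 : ConvexOn ℝ Set.univ (fun x : ℝ => |x|) := by
    refine ⟨convex_univ, fun x _ y _ a b ha hb _ => ?_⟩
    simp only [smul_eq_mul]
    have := abs_add_le (a * x) (b * y)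
    rwa [abs_mul, abs_mul, abs_of_nonneg ha, abs_of_nonneg hb] at this
  have him : (fun x : ℝ => |x|) '' Set.univ = Set.Ici 0 := by
    ext y
    constructor
    · rintro ⟨x, -, rfl⟩; exact abs_nonneg x
    · intro hy; exact ⟨y, trivial, abs_of_nonneg hy⟩
  have h2 : ConvexOn ℝ ((fun x : ℝ => |x|) '' Set.univ) (fun x : ℝ => x ^ r) := by
    rw [him]; exact convexOn_rpow hr
  have h3 : MonotoneOn (fun x : ℝ => x ^ r) ((fun x : ℝ => |x|) '' Set.univ) := by
    rw [him]
    exact fun x hx y _ hxy => Real.rpow_le_rpow hx hxy (le_trans zero_le_one hr)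
  exact h2.comp h1 h3

lemma quad {h : ℝ → ℝ} (hh : ConvexOn ℝ Set.univ h) {s t p q : ℝ}
    (hsp : s ≤ p) (hpt : p ≤ t) (hpq : p + q = s + t) :
    h p + h q ≤ h s + h t := by
  rcases eq_or_lt_of_le (hsp.trans hpt) with he | hst
  · have hp : p = s := le_antisymm (he ▸ hpt) hsp
    have hq : q = t := by linarith
    rw [hp, hq]
  · have hts : t - s ≠ 0 := by linarith
    set l := (t - p) / (t - s) with hl
    have h0 : 0 ≤ l := div_nonneg (by linarith) (by linarith)
    have h1 : 1 - l = (p - s)/(t - s) := by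
      rw [hl, eq_div_iff hts, sub_mul, div_mul_cancel₀ _ hts]; ring
    have h1' : 0 ≤ 1 - l := h1 ▸ div_nonneg (by linarith) (by linarith)
    have hps : p = l * s + (1 - l) * t := by
      rw [h1, hl, div_mul_eq_mul_div, div_mul_eq_mul_div, ← add_div, eq_div_iff hts]; ring
    have hqs : q = (1 - l) * s + l * t := by
      have hq : q = s + t - p := by linarith
      rw [hq, hps]; ring
    have Hp := hh.2 (Set.mem_univ s) (Set.mem_univ t) h0 h1' (by ring)
    have Hq := hh.2 (Set.mem_univ s) (Set.mem_univ t) h1' h0 (by ring)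
    simp only [smul_eq_mul] at Hp Hq
    calc h p + h q = h (l * s + (1-l) * t) + h ((1-l) * s + l * t) := by rw [← hps, ← hqs]
      _ ≤ (l * h s + (1-l) * h t) + ((1-l) * h s + l * h t) := add_le_add Hp Hq
      _ = h s + h t := by ring

lemma monge {r : ℝ} (hr : 1 ≤ r) {x x' y y' : ℝ} (hx : x ≤ x') (hy : y ≤ y') :
    |x - y| ^ r + |x' - y'| ^ r ≤ |x - y'| ^ r + |x' - y| ^ r :=
  quad (myconv hr) (p := x - y) (q := x' - y') (by linarith) (by linarith) (by ring)

lemma key {r : ℝ} (hr : 1 ≤ r) : ∀ (n : ℕ) (a b : Fin n → ℝ), Monotone a → Monotone b →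
    ∀ σ : Equiv.Perm (Fin n), ∑ i, |a i - b i| ^ r ≤ ∑ i, |a i - b (σ i)| ^ r := by
  intro n
  induction n with
  | zero => intro a b _ _ σ; simp
  | succ n ih =>
    intro a b ha hb σ
    set j := σ⁻¹ (Fin.last n) with hj'
    set σ' := σ * Equiv.swap j (Fin.last n) with hσ'
    have hjval : σ j = Fin.last n := by simp [hj']
    have hσ'last : σ' (Fin.last n) = Fin.last n := by
      simp [hσ', Equiv.swap_apply_right, hjval]
    have step1 : ∑ i, |a i - b (σ' i)| ^ r ≤ ∑ i, |a i - b (σ i)| ^ r := by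
      rcases eq_or_ne j (Fin.last n) with hj | hj
      · rw [hσ', hj]; simp
      · have hlm : Fin.last n ∈ Finset.univ.erase j :=
          Finset.mem_erase.mpr ⟨fun h => hj h.symm, Finset.mem_univ _⟩
        have hdec : ∀ F : Fin (n+1) → ℝ,
            ∑ i, F i = (∑ i ∈ (Finset.univ.erase j).erase (Fin.last n), F i)
              + F (Fin.last n) + F j := by
          intro F
          rw [← Finset.sum_erase_add _ _ (Finset.mem_univ j),
            ← Finset.sum_erase_add _ _ hlm]
        rw [hdec (fun i => |a i - b (σ' i)| ^ r), hdec (fun i => |a i - b (σ i)| ^ r)]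
        have hsame : ∑ i ∈ (Finset.univ.erase j).erase (Fin.last n), |a i - b (σ' i)| ^ r
            = ∑ i ∈ (Finset.univ.erase j).erase (Fin.last n), |a i - b (σ i)| ^ r := by
          apply Finset.sum_congr rfl
          intro i hi
          rw [Finset.mem_erase] at hi
          have hij : i ≠ j := (Finset.mem_erase.mp hi.2).1
          rw [hσ']
          simp [Equiv.swap_apply_of_ne_of_ne hij hi.1]
        rw [hsame]
        have hσ'j : σ' j = σ (Fin.last n) := by simp [hσ']
        rw [hσ'last, hσ'j, hjval]
        have hm := monge (x := a j) (x' := a (Fin.last n)) (y := b (σ (Fin.last n)))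
          (y' := b (Fin.last n)) hr (ha (Fin.le_last j)) (hb (Fin.le_last _))
        linarith
    refine le_trans ?_ step1
    have hne : ∀ i : Fin n, σ' i.castSucc ≠ Fin.last n := by
      intro i h
      exact absurd (σ'.injective (h.trans hσ'last.symm)) (Fin.castSucc_lt_last i).ne
    set g : Fin n → Fin n := fun i => (σ' i.castSucc).castPred (hne i) with hg'
    have hg : Function.Injective g := by
      intro i k hik
      have : σ' i.castSucc = σ' k.castSucc := by
        have := congrArg Fin.castSucc hik
        simpa [hg', Fin.castSucc_castPred] using this
      exact Fin.castSucc_injective n (σ'.injective this)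
    set τ : Equiv.Perm (Fin n) := Equiv.ofBijective g (Finite.injective_iff_bijective.mp hg)
      with hτ'
    have hmc : Monotone (Fin.castSucc : Fin n → Fin (n+1)) :=
      fun i k h => Fin.castSucc_le_castSucc_iff.mpr h
    have hIH := ih (fun i => a i.castSucc) (fun i => b i.castSucc)
      (ha.comp hmc) (hb.comp hmc) τ
    have hτ : ∀ i : Fin n, (τ i).castSucc = σ' i.castSucc := by
      intro i
      simp [hτ', Equiv.ofBijective_apply, hg', Fin.castSucc_castPred]
    rw [Fin.sum_univ_castSucc (f := fun i => |a i - b i| ^ r),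
      Fin.sum_univ_castSucc (f := fun i => |a i - b (σ' i)| ^ r), hσ'last]
    apply add_le_add_left
    calc ∑ i : Fin n, |a i.castSucc - b i.castSucc| ^ r
        ≤ ∑ i : Fin n, |a i.castSucc - b ((τ i).castSucc)| ^ r := hIH
      _ = ∑ i : Fin n, |a i.castSucc - b (σ' i.castSucc)| ^ r := by
          apply Finset.sum_congr rfl; intro i _; rw [hτ]

/-- The monotone (sorted-order) matching minimizes the `r`-Wasserstein cost:
for sorted vectors `a b : Fin n → ℝ` (representing two multisets of reals of the
same cardinality `n` listed in increasing order) and any `r ≥ 1`, the value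
`(∑ i, |a i - b i| ^ r) ^ (1/r)` is the least element of the set of costs
`(∑ i, |a i - b (σ i)| ^ r) ^ (1/r)` over all bijections `σ`. -/
theorem sorted_matching_isLeast_wasserstein
    {n : ℕ} (a b : Fin n → ℝ) (ha : Monotone a) (hb : Monotone b)
    (r : ℝ) (hr : 1 ≤ r) :
    IsLeast
      (Set.range fun σ : Equiv.Perm (Fin n) =>
        (∑ i, |a i - b (σ i)| ^ r) ^ (1 / r))
      ((∑ i, |a i - b i| ^ r) ^ (1 / r)) := by
  constructor
  · exact ⟨1, by simp⟩
  · rintro _ ⟨σ, rfl⟩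
    apply Real.rpow_le_rpow
    · exact Finset.sum_nonneg fun i _ => Real.rpow_nonneg (abs_nonneg _) r
    · exact key hr n a b ha hb σ
    · positivity
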